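/- arXiv:math/9908098 — 2 statements merged into one kernel-verified Lean document; each statement's English description precedes it below -/
import Mathlib

section
/- Let G be a perfect group (i.e. G equals its own commutator subgroup), let n ≥ 2, and let H be a subgroup of the direct power G^n (functions Fin n → G with pointwise multiplication) with the property that for every g ∈ G and every pair of distinct indices i ≠ j there exists h ∈ H with h(i) = g and h(j) = 1. Then H = G^n. -/
/-- If `G` is perfect, `n ≥ 2`, and `H ≤ Gⁿ` contains, for every
`g : G` and distinct indices `i ≠ j`, an element equal to `g` at `i` and to `1`
at `j`, then `H = Gⁿ`. -/
theorem stmt_8 {G : Type*} [Group G] (hperf : commutator G = ⊤)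
    {n : ℕ} (hn : 2 ≤ n) (H : Subgroup (Fin n → G))
    (hH : ∀ g : G, ∀ i j : Fin n, i ≠ j → ∃ h ∈ H, h i = g ∧ h j = 1) :
    H = ⊤ := by
  have hnt : Nontrivial (Fin n) := Fin.nontrivial_iff_two_le.mpr hn
  have key : ∀ (T : Finset (Fin n)) (i : Fin n), i ∉ T →
      ∀ g : G, ∃ h ∈ H, h i = g ∧ ∀ k ∈ T, h k = 1 := by
    intro T
    induction T using Finset.induction_on with
    | empty =>
      intro i _ g
      obtain ⟨j, hj⟩ := exists_ne i
      obtain ⟨h, hHm, hi, _⟩ := hH g i j (Ne.symm hj)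
      exact ⟨h, hHm, hi, by simp⟩
    | @insert j T hjT ih =>
      intro i hiT g
      have hij : i ≠ j := fun h => hiT (h ▸ Finset.mem_insert_self j T)
      have hiT' : i ∉ T := fun h => hiT (Finset.mem_insert_of_mem h)
      -- the set of achievable values at i is a subgroup of G
      set K : Subgroup G :=
        { carrier := {g | ∃ h ∈ H, h i = g ∧ ∀ k ∈ insert j T, h k = 1}
          one_mem' := ⟨1, H.one_mem, rfl, fun _ _ => rfl⟩
          mul_mem' := by
            rintro a b ⟨x, hx, hxi, hxT⟩ ⟨y, hy, hyi, hyT⟩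
            exact ⟨x * y, H.mul_mem hx hy, by simp [hxi, hyi],
              fun k hk => by simp [hxT k hk, hyT k hk]⟩
          inv_mem' := by
            rintro a ⟨x, hx, hxi, hxT⟩
            exact ⟨x⁻¹, H.inv_mem hx, by simp [hxi],
              fun k hk => by simp [hxT k hk]⟩ } with hK
      have htop : (⊤ : Subgroup G) ≤ K := by
        rw [← hperf, commutator_eq_closure, Subgroup.closure_le]
        rintro c ⟨a, b, rfl⟩
        obtain ⟨x, hx, hxi, hxT⟩ := ih i hiT' a
        obtain ⟨y, hy, hyi, hyj⟩ := hH b i j hij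
        have hcom : x * y * x⁻¹ * y⁻¹ ∈ H := by
          exact H.mul_mem (H.mul_mem (H.mul_mem hx hy) (H.inv_mem hx)) (H.inv_mem hy)
        refine ⟨x * y * x⁻¹ * y⁻¹, hcom, ?_, ?_⟩
        · simp [commutatorElement_def, hxi, hyi]
        · intro k hk
          rcases Finset.mem_insert.mp hk with hkj | hkT
          · subst hkj
            simp [commutatorElement_def, hyj]
          · simp [commutatorElement_def, hxT k hkT]
      exact htop (Subgroup.mem_top g)
  have single : ∀ (i : Fin n) (g : G), Pi.mulSingle i g ∈ H := by
    intro i g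
    obtain ⟨h, hHm, hi, hT⟩ := key (Finset.univ.erase i) i (Finset.notMem_erase i _) g
    have : h = Pi.mulSingle i g := by
      funext k
      by_cases hk : k = i
      · subst hk; simp [hi]
      · simp [Pi.mulSingle, hk, hT k (Finset.mem_erase.mpr ⟨hk, Finset.mem_univ k⟩)]
    exact this ▸ hHm
  rw [eq_top_iff]
  intro f _
  have main : ∀ s : Finset (Fin n), (fun k => if k ∈ s then f k else 1) ∈ H := by
    intro s
    induction s using Finset.induction_on with
    | empty => simpa [← Pi.one_def] using H.one_mem
    | @insert i s his ihs =>
      have : (fun k => if k ∈ insert i s then f k else 1) =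
          Pi.mulSingle i (f i) * (fun k => if k ∈ s then f k else 1) := by
        funext k
        by_cases hk : k = i
        · subst hk; simp [his]
        · simp [Pi.mulSingle, hk, Finset.mem_insert]
      rw [this]
      exact H.mul_mem (single i (f i)) ihs
  have := main Finset.univ
  simpa using this
end

section
/- Let α, β : ℝ → ℝ^d be real-analytic curves whose derivatives are nonvanishing at every point of [0,1]. If the intersection α([0,1]) ∩ β([0,1]) of their images is an infinite set, then there exist nondegenerate closed intervals I, J ⊆ [0,1] such that α(I) = β(J); i.e., two regular analytic curves either intersect in finitely many points or share a common nondegenerate subarc. -/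
open Filter Set Metric
open scoped Topology


lemma analytic_local_inverse {f : ℝ → ℝ} {s : ℝ} (hf : AnalyticAt ℝ f s)
    (hf' : deriv f s ≠ 0) :
    ∃ φ : ℝ → ℝ, AnalyticAt ℝ φ (f s) ∧ ∀ᶠ u in 𝓝 s, φ (f u) = u := by
  have hd : HasStrictDerivAt f (deriv f s) s := by
    simpa [fderiv_apply_one_eq_deriv] using hf.hasStrictFDerivAt.hasStrictDerivAt
  have hF := hd.hasStrictFDerivAt_equiv hf'
  set F := hF.toOpenPartialHomeomorph f with hFdef
  have hco : (F : ℝ → ℝ) = f := rfl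
  have hsrc : s ∈ F.source := hF.mem_toOpenPartialHomeomorph_source
  have hFa : AnalyticAt ℝ (⇑F) s := hf
  have hfd : fderiv ℝ (⇑F) s =
      (ContinuousLinearEquiv.unitsEquivAut ℝ (Units.mk0 (deriv f s) hf') : ℝ →L[ℝ] ℝ) :=
    hF.hasFDerivAt.fderiv
  have hsymm := F.analyticAt_symm' hsrc hFa hfd
  exact ⟨⇑F.symm, hsymm, hF.eventually_left_inverse⟩


lemma aux_final {d : ℕ} (α β : ℝ → EuclideanSpace ℝ (Fin d)) (ψ : ℝ → ℝ) (c e : ℝ)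
    (hce : c < e) (hI : Set.Icc c e ⊆ Set.Icc (0:ℝ) 1)
    (hψc : ψ c ∈ Set.Icc (0:ℝ) 1) (hψe : ψ e ∈ Set.Icc (0:ℝ) 1)
    (hcont : ContinuousOn ψ (Set.Icc c e))
    (hmono : StrictMonoOn ψ (Set.Icc c e) ∨ StrictAntiOn ψ (Set.Icc c e))
    (heq : ∀ v ∈ Set.Icc c e, β v = α (ψ v)) :
    ∃ a b c' e' : ℝ, a < b ∧ c' < e' ∧
      Set.Icc a b ⊆ Set.Icc (0:ℝ) 1 ∧ Set.Icc c' e' ⊆ Set.Icc (0:ℝ) 1 ∧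
      α '' Set.Icc a b = β '' Set.Icc c' e' := by
  have hcm : c ∈ Set.Icc c e := left_mem_Icc.2 hce.le
  have hem : e ∈ Set.Icc c e := right_mem_Icc.2 hce.le
  have himg2 : β '' Set.Icc c e = α '' (ψ '' Set.Icc c e) := by
    rw [Set.image_image]
    exact Set.image_congr heq
  rcases hmono with hm | hm
  · have himg : ψ '' Set.Icc c e = Set.Icc (ψ c) (ψ e) := by
      apply Subset.antisymm
      · rintro y ⟨x, hx, rfl⟩
        exact ⟨hm.monotoneOn hcm hx hx.1, hm.monotoneOn hx hem hx.2⟩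
      · exact intermediate_value_Icc hce.le hcont
    exact ⟨ψ c, ψ e, c, e, hm hcm hem hce, hce,
      Set.Icc_subset_Icc hψc.1 hψe.2, hI, by rw [himg2, himg]⟩
  · have himg : ψ '' Set.Icc c e = Set.Icc (ψ e) (ψ c) := by
      apply Subset.antisymm
      · rintro y ⟨x, hx, rfl⟩
        exact ⟨hm.antitoneOn hx hem hx.2, hm.antitoneOn hcm hx hx.1⟩
      · exact intermediate_value_Icc' hce.le hcont
    exact ⟨ψ e, ψ c, c, e, hm hcm hem hce, hce,
      Set.Icc_subset_Icc hψe.1 hψc.2, hI, by rw [himg2, himg]⟩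

lemma coordA {d : ℕ} {γ : ℝ → EuclideanSpace ℝ (Fin d)} {u : ℝ}
    (hγ : AnalyticAt ℝ γ u) (i : Fin d) : AnalyticAt ℝ (fun v => γ v i) u :=
  ((EuclideanSpace.proj (𝕜 := ℝ) i).analyticAt (γ u)).comp hγ

lemma coordD {d : ℕ} {γ : ℝ → EuclideanSpace ℝ (Fin d)} {u : ℝ}
    (hγ : DifferentiableAt ℝ γ u) (i : Fin d) :
    HasDerivAt (fun v => γ v i) (deriv γ u i) u := by
  exact (EuclideanSpace.proj (𝕜 := ℝ) i).hasFDerivAt.comp_hasDerivAt u hγ.hasDerivAt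


/-- Two regular real-analytic curves whose images over `[0,1]`
intersect in infinitely many points share a common nondegenerate subarc. -/
theorem stmt_10 (d : ℕ) (α β : ℝ → EuclideanSpace ℝ (Fin d))
    (hα : ∀ x : ℝ, AnalyticAt ℝ α x) (hβ : ∀ x : ℝ, AnalyticAt ℝ β x)
    (hα' : ∀ t ∈ Set.Icc (0:ℝ) 1, deriv α t ≠ 0)
    (hβ' : ∀ t ∈ Set.Icc (0:ℝ) 1, deriv β t ≠ 0)
    (hinf : (α '' Set.Icc (0:ℝ) 1 ∩ β '' Set.Icc (0:ℝ) 1).Infinite) :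
    ∃ a b c e : ℝ, a < b ∧ c < e ∧
      Set.Icc a b ⊆ Set.Icc (0:ℝ) 1 ∧ Set.Icc c e ⊆ Set.Icc (0:ℝ) 1 ∧
      α '' Set.Icc a b = β '' Set.Icc c e := by
  classical
  have hαc : Continuous α := continuous_iff_continuousAt.2 fun v => (hα v).continuousAt
  have hβc : Continuous β := continuous_iff_continuousAt.2 fun v => (hβ v).continuousAt
  set I : Set ℝ := Set.Icc (0:ℝ) 1 with hIdef
  set P : Set (ℝ × ℝ) := (I ×ˢ I) ∩ {p | α p.1 = β p.2} with hPdef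
  have hPcomp : IsCompact P :=
    (isCompact_Icc.prod isCompact_Icc).inter_right
      (isClosed_eq (hαc.comp continuous_fst) (hβc.comp continuous_snd))
  have hPinf : P.Infinite := by
    apply Set.Infinite.of_image (fun p => α p.1)
    apply Set.Infinite.mono ?_ hinf
    rintro x ⟨⟨u, hu, hux⟩, ⟨v, hv, hvx⟩⟩
    exact ⟨(u, v), ⟨⟨hu, hv⟩, by simp only [Set.mem_setOf_eq]; rw [hux, hvx]⟩, hux⟩
  obtain ⟨⟨s, t⟩, hstP, hacc⟩ := hPinf.exists_accPt_of_subset_isCompact hPcomp subset_rfl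
  obtain ⟨⟨hsI, htI⟩, hst⟩ := hstP
  simp only [Set.mem_setOf_eq] at hst
  -- choose a coordinate for α at s
  obtain ⟨i, hi⟩ : ∃ i, deriv α s i ≠ 0 := by
    by_contra h
    push_neg at h
    exact hα' s hsI (WithLp.ofLp_injective 2 (funext fun j => h j))
  set f : ℝ → ℝ := fun u => α u i with hfdef
  have hfi : deriv f s ≠ 0 := by
    rw [(coordD (hα s).differentiableAt i).deriv]; exact hi
  obtain ⟨φ, hφa, hφl⟩ := analytic_local_inverse (coordA (hα s) i) hfi
  set ψ : ℝ → ℝ := fun v => φ (β v i) with hψdef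
  have hβit : β t i = f s := by rw [hfdef]; simp only [← hst]
  have hψt : ψ t = s := by
    have h1 : φ (f s) = s := hφl.self_of_nhds
    simp only [hψdef, hβit, h1]
  have hfreq : ∃ᶠ p : ℝ × ℝ in 𝓝 (s, t), p ≠ (s, t) ∧ p ∈ P :=
    accPt_iff_frequently.1 hacc
  have hEα : ∀ᶠ p : ℝ × ℝ in 𝓝 (s, t), φ (α p.1 i) = p.1 :=
    (continuousAt_fst : Filter.Tendsto Prod.fst (𝓝 (s, t)) (𝓝 s)).eventually hφl
  by_cases hB : ∃ᶠ p : ℝ × ℝ in 𝓝 (s, t), p.2 = t ∧ p.1 ≠ s ∧ p ∈ P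
  · exfalso
    have h1 : ∃ᶠ u in 𝓝 s, u ≠ s ∧ α u = β t := by
      have h2 : ∃ᶠ p : ℝ × ℝ in 𝓝 (s, t), (fun u => u ≠ s ∧ α u = β t) p.1 := by
        refine hB.mono ?_
        rintro ⟨u, v⟩ ⟨hv, hu, -, hp⟩
        simp only [Set.mem_setOf_eq] at hp
        exact ⟨hu, by rw [hp]; exact congrArg β hv⟩
      have h3 : ∃ᶠ u in Filter.map Prod.fst (𝓝 (s, t)), u ≠ s ∧ α u = β t := by
        rw [Filter.frequently_map]; exact h2
      rwa [nhds_prod_eq, Filter.map_fst_prod] at h3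
    have h4 : ∃ᶠ u in 𝓝[≠] s, α u - β t = 0 := by
      rw [frequently_nhdsWithin_iff]
      exact h1.mono fun u hu => ⟨sub_eq_zero.2 hu.2, hu.1⟩
    have h5 := (AnalyticAt.frequently_zero_iff_eventually_zero
      ((hα s).sub analyticAt_const)).1 h4
    have h6 : deriv α s = 0 := by
      have hev : α =ᶠ[𝓝 s] fun _ => β t := h5.mono fun u hu => sub_eq_zero.1 hu
      rw [hev.deriv_eq]
      exact deriv_const _ _
    exact hα' s hsI h6
  · have hnotB := not_frequently.1 hB
    have hA : ∃ᶠ p : ℝ × ℝ in 𝓝 (s, t), p.2 ≠ t ∧ p ∈ P ∧ φ (α p.1 i) = p.1 := by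
      refine ((hfreq.and_eventually hEα).and_eventually hnotB).mono ?_
      rintro ⟨u, v⟩ ⟨⟨⟨hne, hp⟩, hinv⟩, hnot⟩
      refine ⟨fun hvt => hnot ⟨hvt, fun hus => hne (Prod.ext hus hvt), hp⟩, hp, hinv⟩
    have hA2 : ∃ᶠ v in 𝓝 t, v ≠ t ∧ v ∈ I ∧ ψ v ∈ I ∧ β v = α (ψ v) := by
      have h2 : ∃ᶠ p : ℝ × ℝ in 𝓝 (s, t),
          (fun v => v ≠ t ∧ v ∈ I ∧ ψ v ∈ I ∧ β v = α (ψ v)) p.2 := by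
        refine hA.mono ?_
        rintro ⟨u, v⟩ ⟨hvt, ⟨⟨huI, hvI⟩, hp⟩, hinv⟩
        simp only [Set.mem_setOf_eq] at hp
        have hψv : ψ v = u := by
          simp only [hψdef]
          rw [show β v i = α u i by rw [hp], hinv]
        exact ⟨hvt, hvI, by rw [hψv]; exact huI, by rw [hψv, ← hp]⟩
      have h3 : ∃ᶠ v in Filter.map Prod.snd (𝓝 (s, t)),
          v ≠ t ∧ v ∈ I ∧ ψ v ∈ I ∧ β v = α (ψ v) := by
        rw [Filter.frequently_map]; exact h2
      rwa [nhds_prod_eq, Filter.map_snd_prod] at h3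
    have hψa : AnalyticAt ℝ ψ t := by
      have hb : AnalyticAt ℝ (fun v => β v i) t := coordA (hβ t) i
      have hφ' : AnalyticAt ℝ φ (β t i) := by
        rw [hβit]; exact hφa
      exact AnalyticAt.comp (f := fun v => β v i) hφ' hb
    have hha : AnalyticAt ℝ (fun v => β v - α (ψ v)) t :=
      (hβ t).sub ((hα (ψ t)).comp hψa)
    have heq : ∀ᶠ v in 𝓝 t, β v = α (ψ v) := by
      have hzero : ∀ᶠ v in 𝓝 t, β v - α (ψ v) = 0 := by
        apply (AnalyticAt.frequently_zero_iff_eventually_zero hha).1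
        rw [frequently_nhdsWithin_iff]
        exact hA2.mono fun v hv => ⟨sub_eq_zero.2 hv.2.2.2, hv.1⟩
      exact hzero.mono fun v hv => sub_eq_zero.1 hv
    have hψd : deriv ψ t ≠ 0 := by
      intro h0
      have hcomp : HasDerivAt (fun v => α (ψ v)) (deriv ψ t • deriv α (ψ t)) t :=
        HasDerivAt.scomp t (hα (ψ t)).differentiableAt.hasDerivAt
          hψa.differentiableAt.hasDerivAt
      have hd : deriv β t = deriv ψ t • deriv α (ψ t) := by
        have heqq : β =ᶠ[𝓝 t] fun v => α (ψ v) := heq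
        rw [heqq.deriv_eq]
        exact hcomp.deriv
      rw [h0, zero_smul] at hd
      exact hβ' t htI hd
    obtain ⟨U, hUnhd, hψU⟩ := hψa.exists_mem_nhds_analyticOnNhd
    have hdc : ContinuousAt (deriv ψ) t :=
      ((hψU.deriv) t (mem_of_mem_nhds hUnhd)).continuousAt
    have hsgn : ∀ᶠ v in 𝓝 t, 0 < deriv ψ v * deriv ψ t := by
      have hc2 : ContinuousAt (fun v => deriv ψ v * deriv ψ t) t :=
        hdc.mul continuousAt_const
      exact hc2.eventually_mem (Ioi_mem_nhds (mul_self_pos.2 hψd))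
    have hEv : ∀ᶠ v in 𝓝 t,
        β v = α (ψ v) ∧ AnalyticAt ℝ ψ v ∧ 0 < deriv ψ v * deriv ψ t :=
      heq.and (hψa.eventually_analyticAt.and hsgn)
    obtain ⟨δ, hδ, hball⟩ := Metric.eventually_nhds_iff_ball.1 hEv
    obtain ⟨t', ht'ball, ht'ne, ht'I, hψt'I⟩ :
        ∃ t', t' ∈ ball t δ ∧ t' ≠ t ∧ t' ∈ I ∧ ψ t' ∈ I := by
      obtain ⟨v, ⟨hne, hvI, hψvI, -⟩, hball'⟩ :=
        (hA2.and_eventually (Metric.ball_mem_nhds t hδ)).exists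
      exact ⟨v, hball', hne, hvI, hψvI⟩
    set c := min t t' with hcdef
    set e := max t t' with hedef
    have hce : c < e := min_lt_max.2 (Ne.symm ht'ne)
    have hsub : Set.Icc c e ⊆ ball t δ := by
      have ht_mem : t ∈ ball t δ := mem_ball_self hδ
      rw [Real.ball_eq_Ioo] at ht_mem ht'ball ⊢
      exact Set.Icc_subset_Ioo (lt_min ht_mem.1 ht'ball.1) (max_lt ht_mem.2 ht'ball.2)
    have hIccI : Set.Icc c e ⊆ I :=
      Set.Icc_subset_Icc (le_min htI.1 ht'I.1) (max_le htI.2 ht'I.2)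
    have hcontOn : ContinuousOn ψ (Set.Icc c e) := fun x hx =>
      ((hball x (hsub hx)).2.1.continuousAt).continuousWithinAt
    have hpair : ψ c ∈ I ∧ ψ e ∈ I := by
      rcases le_total t t' with h | h
      · rw [hcdef, hedef, min_eq_left h, max_eq_right h, hψt]
        exact ⟨hsI, hψt'I⟩
      · rw [hcdef, hedef, min_eq_right h, max_eq_left h, hψt]
        exact ⟨hψt'I, hsI⟩
    have hmono : StrictMonoOn ψ (Set.Icc c e) ∨ StrictAntiOn ψ (Set.Icc c e) := by
      rcases lt_or_gt_of_ne hψd with hneg | hpos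
      · right
        apply strictAntiOn_of_deriv_neg (convex_Icc c e) hcontOn
        intro x hx
        have h1 := (hball x (hsub (interior_subset hx))).2.2
        rcases mul_pos_iff.1 h1 with ⟨-, h3⟩ | ⟨h2, -⟩
        · exact absurd h3 (not_lt.2 hneg.le)
        · exact h2
      · left
        apply strictMonoOn_of_deriv_pos (convex_Icc c e) hcontOn
        intro x hx
        have h1 := (hball x (hsub (interior_subset hx))).2.2
        rcases mul_pos_iff.1 h1 with ⟨h2, -⟩ | ⟨-, h3⟩
        · exact h2
        · exact absurd h3 (not_lt.2 hpos.le)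
    exact aux_final α β ψ c e hce hIccI hpair.1 hpair.2 hcontOn hmono
      fun v hv => (hball v (hsub hv)).1
end
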